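/- Let L > 0, let H ∈ ℝ be such that 1 + tH > 0 for every t ∈ [0, L], let λ > 0, and let u : ℝ → ℝ be continuously differentiable on [0, L]. Then ∫₀^L u′(t)² (1 + tH) dt ≥ (1 − λ)(1 + LH) u(L)²/L + (1/L)(1 − 1/λ) ( u(0) + (H/2) ∫₀^L u(t)/√(1 + tH) dt )². -/

import Mathlib

/-- Ray-wise lower bound for the weighted Dirichlet energy: if `1 + tH > 0` on
`[0, L]`, `λ > 0` and `u` is continuously differentiable on `[0, L]`, then
`∫₀^L u′(t)² (1+tH) dt ≥ (1−λ)(1+LH) u(L)²/L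
+ (1/L)(1−1/λ)(u(0) + (H/2)∫₀^L u(t)/√(1+tH) dt)²`. -/
theorem raywise_liminf_inequality
    (L : ℝ) (hL : 0 < L) (H : ℝ) (hH : ∀ t ∈ Set.Icc (0 : ℝ) L, 0 < 1 + t * H)
    (lam : ℝ) (hlam : 0 < lam)
    (u u' : ℝ → ℝ)
    (hderiv : ∀ t ∈ Set.Icc (0 : ℝ) L, HasDerivAt u (u' t) t)
    (hcont : ContinuousOn u' (Set.Icc (0 : ℝ) L)) :
    ∫ t in (0 : ℝ)..L, (u' t) ^ 2 * (1 + t * H) ≥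
      (1 - lam) * (1 + L * H) * (u L) ^ 2 / L
        + (1 / L) * (1 - 1 / lam) *
          (u 0 + (H / 2) * ∫ t in (0 : ℝ)..L, u t / Real.sqrt (1 + t * H)) ^ 2 := by
  have hicc : Set.uIcc (0:ℝ) L = Set.Icc 0 L := Set.uIcc_of_le hL.le
  set g : ℝ → ℝ := fun t => Real.sqrt (1 + t * H) with hg_def
  set g' : ℝ → ℝ := fun t => H / (2 * Real.sqrt (1 + t * H)) with hg'_def
  have hgpos : ∀ t ∈ Set.Icc (0:ℝ) L, 0 < g t := fun t ht => Real.sqrt_pos.mpr (hH t ht)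
  have hgderiv : ∀ t ∈ Set.Icc (0:ℝ) L, HasDerivAt g (g' t) t := by
    intro t ht
    have h1 : HasDerivAt (fun s : ℝ => 1 + s * H) H t := by
      simpa using ((hasDerivAt_id t).mul_const H).const_add 1
    have h2 : HasDerivAt g (1 / (2 * Real.sqrt (1 + t * H)) * H) t :=
      (Real.hasDerivAt_sqrt (ne_of_gt (hH t ht))).comp t h1
    convert h2 using 1
    simp [hg'_def]; ring
  have hbase : Continuous (fun t : ℝ => 1 + t * H) :=
    continuous_const.add (continuous_id.mul continuous_const)
  have hgc : Continuous g := Real.continuous_sqrt.comp hbase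
  have hg'c : ContinuousOn g' (Set.Icc (0:ℝ) L) :=
    ContinuousOn.div continuousOn_const ((continuous_const.mul hgc).continuousOn)
      (fun t ht => (mul_pos two_pos (hgpos t ht)).ne')
  have huc : ContinuousOn u (Set.Icc (0:ℝ) L) :=
    fun t ht => (hderiv t ht).continuousAt.continuousWithinAt
  -- integrabilities
  have hInt_f : IntervalIntegrable (fun t => g t * u' t) MeasureTheory.volume 0 L :=
    ContinuousOn.intervalIntegrable (by rw [hicc]; exact hgc.continuousOn.mul hcont)
  have hInt_u' : IntervalIntegrable u' MeasureTheory.volume 0 L :=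
    ContinuousOn.intervalIntegrable (by rw [hicc]; exact hcont)
  have hInt_g' : IntervalIntegrable g' MeasureTheory.volume 0 L :=
    ContinuousOn.intervalIntegrable (by rw [hicc]; exact hg'c)
  -- integration by parts
  have hIBP := intervalIntegral.integral_mul_deriv_eq_deriv_mul
    (fun x hx => hgderiv x (hicc ▸ hx)) (fun x hx => hderiv x (hicc ▸ hx)) hInt_g' hInt_u'
  -- hIBP : ∫ g * u' = g L * u L - g 0 * u 0 - ∫ g' * u
  have hg0 : g 0 = 1 := by simp [hg_def]
  set I : ℝ := ∫ t in (0:ℝ)..L, g t * u' t with hI_def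
  set Y : ℝ := u 0 + (H / 2) * ∫ t in (0 : ℝ)..L, u t / Real.sqrt (1 + t * H) with hY_def
  set X : ℝ := g L * u L with hX_def
  have hgu : (∫ t in (0:ℝ)..L, g' t * u t)
      = (H / 2) * ∫ t in (0 : ℝ)..L, u t / Real.sqrt (1 + t * H) := by
    rw [← intervalIntegral.integral_const_mul]
    apply intervalIntegral.integral_congr
    intro t _
    simp only [hg'_def]
    rw [div_mul_eq_mul_div, mul_div_assoc]
    ring_nf
  have hI : I = X - Y := by
    rw [hIBP, hg0, hgu, hY_def]; ring
  -- Cauchy-Schwarz via the quadratic trick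
  set c : ℝ := I / L with hc_def
  have h0 : 0 ≤ ∫ t in (0:ℝ)..L, (g t * u' t - c) ^ 2 :=
    intervalIntegral.integral_nonneg hL.le (fun t _ => sq_nonneg _)
  have hexp : (∫ t in (0:ℝ)..L, (g t * u' t - c) ^ 2)
      = (∫ t in (0:ℝ)..L, (g t * u' t) ^ 2) - 2 * c * I + c ^ 2 * L := by
    have heq : ∀ t, (g t * u' t - c) ^ 2
        = (g t * u' t) ^ 2 - (2 * c) * (g t * u' t) + c ^ 2 := by intro t; ring
    have hInt_f2 : IntervalIntegrable (fun t => (g t * u' t) ^ 2)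
        MeasureTheory.volume 0 L := by
      apply ContinuousOn.intervalIntegrable
      rw [hicc]
      exact (hgc.continuousOn.mul hcont).pow 2
    rw [intervalIntegral.integral_congr (g := fun t =>
      (g t * u' t) ^ 2 - (2 * c) * (g t * u' t) + c ^ 2) (fun t _ => heq t)]
    rw [intervalIntegral.integral_add (hInt_f2.sub ((hInt_f.const_mul _)))
      intervalIntegrable_const]
    rw [intervalIntegral.integral_sub hInt_f2 (hInt_f.const_mul _)]
    rw [intervalIntegral.integral_const_mul, intervalIntegral.integral_const]
    simp [hI_def]
    ring
  have hCS : (∫ t in (0:ℝ)..L, (g t * u' t) ^ 2) ≥ I ^ 2 / L := by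
    have h1 : 0 ≤ (∫ t in (0:ℝ)..L, (g t * u' t) ^ 2) - 2 * c * I + c ^ 2 * L := by
      rw [← hexp]; exact h0
    have hc2 : c * L = I := by rw [hc_def]; field_simp
    rw [ge_iff_le, div_le_iff₀ hL]
    nlinarith [h1, hc2, hL]
  -- rewrite the LHS
  have hLHS : (∫ t in (0:ℝ)..L, (u' t) ^ 2 * (1 + t * H))
      = ∫ t in (0:ℝ)..L, (g t * u' t) ^ 2 := by
    apply intervalIntegral.integral_congr
    intro t ht
    rw [hicc] at ht
    have h : (g t) ^ 2 = 1 + t * H := Real.sq_sqrt (hH t ht).le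
    show u' t ^ 2 * (1 + t * H) = (g t * u' t) ^ 2
    rw [mul_pow, h]; ring
  -- Young's inequality step
  have hYoung : (X - Y) ^ 2 ≥ (1 - lam) * X ^ 2 + (1 - 1 / lam) * Y ^ 2 := by
    have hkey : (1 - lam) * X ^ 2 + (1 - 1 / lam) * Y ^ 2
        = (X - Y) ^ 2 - (1 / lam) * (lam * X - Y) ^ 2 := by
      field_simp
      ring
    have hnn : 0 ≤ (1 / lam) * (lam * X - Y) ^ 2 :=
      mul_nonneg (by positivity) (sq_nonneg _)
    linarith [hkey, hnn]
  have hX2 : X ^ 2 = (1 + L * H) * (u L) ^ 2 := by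
    rw [hX_def, mul_pow, hg_def]
    rw [Real.sq_sqrt (hH L (Set.right_mem_Icc.mpr hL.le)).le]
  calc ∫ t in (0:ℝ)..L, (u' t) ^ 2 * (1 + t * H)
      = ∫ t in (0:ℝ)..L, (g t * u' t) ^ 2 := hLHS
    _ ≥ I ^ 2 / L := hCS
    _ = (X - Y) ^ 2 / L := by rw [hI]
    _ ≥ ((1 - lam) * X ^ 2 + (1 - 1 / lam) * Y ^ 2) / L := by gcongr
    _ = (1 - lam) * (1 + L * H) * (u L) ^ 2 / L + (1 / L) * (1 - 1 / lam) * Y ^ 2 := by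
        rw [hX2]; field_simp
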